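/- Let n ≥ 2, 0 < h₁ < ⋯ < hₙ, let p ∈ ℝⁿ be a probability vector with positive entries, let Q* ≥ 0, w ≥ 1, and suppose g_m > 0 satisfies (1−pₙ)/g_m² ≥ Σ_{i=1}^{n−1} pᵢ/hᵢ². Let q ∈ ℝᵐ be a probability vector with positive entries and 0 < g₁ < ⋯ < g_m, set aᵢ = Q* + 1/hᵢ², bⱼ = Q* + 1/gⱼ², T = Σᵢ pᵢ/aᵢ = w Σⱼ qⱼ/bⱼ, and T₁ = (T − pₙ/aₙ)/(1−pₙ). Then for every k ∈ {0,1,…,m}: (w−1)T₁ ≥ w Σ_{j=1}^k qⱼ(T₁ − 1/bⱼ). -/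

import Mathlib

/-- Conclusion of the second part of the proof of Theorem 3 (thm:deg-gen): under
condition 2 of that theorem (`(1−pₙ)/g_m² ≥ ∑_{i<n} pᵢ/hᵢ²`), condition
(thm:cond2) of Theorem 2 holds for every `k ∈ {0,1,…,m}`:
`(w−1)T₁ ≥ w ∑_{j=1}^k qⱼ(T₁ − 1/bⱼ)`.
Here `n ≥ 2` is encoded as `n + 2` and `m ≥ 1` as `m + 1`. -/
theorem stmt14 (n m : ℕ)
    (h : Fin (n + 2) → ℝ) (hh0 : ∀ i, 0 < h i) (hhmono : StrictMono h)
    (p : Fin (n + 2) → ℝ) (hp : ∀ i, 0 < p i) (hpsum : ∑ i, p i = 1)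
    (Qstar w : ℝ) (hQs : 0 ≤ Qstar) (hw : 1 ≤ w)
    (g : Fin (m + 1) → ℝ) (hg0 : ∀ j, 0 < g j) (hgmono : StrictMono g)
    (hcond : (1 - p (Fin.last (n + 1))) / (g (Fin.last m)) ^ 2 ≥
      ∑ i ∈ Finset.univ.erase (Fin.last (n + 1)), p i / (h i) ^ 2)
    (q : Fin (m + 1) → ℝ) (hq : ∀ j, 0 < q j) (hqsum : ∑ j, q j = 1)
    (a : Fin (n + 2) → ℝ) (b : Fin (m + 1) → ℝ)
    (ha : ∀ i, a i = Qstar + 1 / (h i) ^ 2)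
    (hb : ∀ j, b j = Qstar + 1 / (g j) ^ 2)
    (T : ℝ) (hT : T = ∑ i, p i / a i)
    (hbal : T = w * ∑ j, q j / b j)
    (T1 : ℝ)
    (hT1 : T1 = (T - p (Fin.last (n + 1)) / a (Fin.last (n + 1))) /
      (1 - p (Fin.last (n + 1)))) :
    ∀ k : ℕ, k ≤ m + 1 →
      (w - 1) * T1 ≥
        w * ∑ j ∈ Finset.univ.filter (fun j : Fin (m + 1) => (j : ℕ) < k),
          q j * (T1 - 1 / b j) := by
  intro k hk
  set L : Fin (n + 2) := Fin.last (n + 1) with hLdef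
  set M : Fin (m + 1) := Fin.last m with hMdef
  have hw0 : (0:ℝ) < w := lt_of_lt_of_le one_pos hw
  have hapos : ∀ i, 0 < a i := fun i => by
    have := hh0 i; rw [ha]; positivity
  have hbpos : ∀ j, 0 < b j := fun j => by
    have := hg0 j; rw [hb]; positivity
  -- p L < 1
  have hpL : p L < 1 := by
    have h0 : (0 : Fin (n + 2)) ≠ L := by
      simp [hLdef, Fin.ext_iff, Fin.last]
    calc p L < ∑ i, p i :=
          Finset.single_lt_sum h0 (Finset.mem_univ _) (Finset.mem_univ _) (hp 0)
            (fun i _ _ => (hp i).le)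
      _ = 1 := hpsum
  have h1pL : 0 < 1 - p L := by linarith
  -- a L is the minimum of a
  have haL : ∀ i, a L ≤ a i := by
    intro i
    have hle : h i ≤ h L := hhmono.monotone (Fin.le_last i)
    have hsq : (h i) ^ 2 ≤ (h L) ^ 2 := by nlinarith [hh0 i]
    rw [ha, ha]
    have hhi := hh0 i
    have : 1 / (h L) ^ 2 ≤ 1 / (h i) ^ 2 :=
      one_div_le_one_div_of_le (by positivity) hsq
    linarith
  -- b M is the minimum of b
  have hbM : ∀ j, b M ≤ b j := by
    intro j
    have hle : g j ≤ g M := hgmono.monotone (Fin.le_last j)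
    have hsq : (g j) ^ 2 ≤ (g M) ^ 2 := by nlinarith [hg0 j]
    rw [hb, hb]
    have hgj := hg0 j
    have : 1 / (g M) ^ 2 ≤ 1 / (g j) ^ 2 :=
      one_div_le_one_div_of_le (by positivity) hsq
    linarith
  -- T ≤ 1 / a L
  have hTle : T ≤ 1 / a L := by
    have : ∀ i ∈ (Finset.univ : Finset (Fin (n+2))), p i / a i ≤ p i / a L := by
      intro i _
      exact div_le_div_of_nonneg_left (hp i).le (hapos L) (haL i)
    calc T = ∑ i, p i / a i := hT
      _ ≤ ∑ i, p i / a L := Finset.sum_le_sum this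
      _ = (∑ i, p i) / a L := by rw [Finset.sum_div]
      _ = 1 / a L := by rw [hpsum]
  -- sum of p over erase L
  have hsp : ∑ i ∈ Finset.univ.erase L, p i = 1 - p L := by
    rw [Finset.sum_erase_eq_sub (Finset.mem_univ L), hpsum]
  -- tangent line inequality, per term
  have key : ∀ i, p i / b M - p i * (a i - b M) / (b M) ^ 2 ≤ p i / a i := by
    intro i
    have hA := hapos i; have hB := hbpos M; have hpi := hp i
    have h2 : p i / a i - (p i / b M - p i * (a i - b M) / (b M) ^ 2)
        = p i * (a i - b M) ^ 2 / (a i * (b M) ^ 2) := by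
      field_simp; ring
    have h3 : 0 ≤ p i * (a i - b M) ^ 2 / (a i * (b M) ^ 2) := by positivity
    linarith
  -- the weighted average of a over erase L is at most b M
  have hEA : ∑ i ∈ Finset.univ.erase L, p i * (a i - b M) ≤ 0 := by
    have hrw : ∀ i ∈ Finset.univ.erase L,
        p i * (a i - b M) = Qstar * p i + p i / (h i) ^ 2 - b M * p i := by
      intro i _
      have := (hh0 i).ne'
      rw [ha]; field_simp
    rw [Finset.sum_congr rfl hrw]
    have hS : ∑ i ∈ Finset.univ.erase L, p i / (h i) ^ 2
        ≤ (1 - p L) * (1 / (g M) ^ 2) := by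
      have := hcond
      have hgM := hg0 M
      calc ∑ i ∈ Finset.univ.erase L, p i / (h i) ^ 2
          ≤ (1 - p L) / (g M) ^ 2 := hcond
        _ = (1 - p L) * (1 / (g M) ^ 2) := by ring
    have hbMeq : b M = Qstar + 1 / (g M) ^ 2 := hb M
    have : ∑ i ∈ Finset.univ.erase L, (Qstar * p i + p i / (h i) ^ 2 - b M * p i)
        = Qstar * (1 - p L) + (∑ i ∈ Finset.univ.erase L, p i / (h i) ^ 2)
          - b M * (1 - p L) := by
      rw [Finset.sum_sub_distrib, Finset.sum_add_distrib, ← Finset.mul_sum,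
        ← Finset.mul_sum, hsp]
    rw [this]
    nlinarith [hS]
  -- the erased sum is at least (1 - p L)/b M
  have hsumge : (1 - p L) / b M ≤ ∑ i ∈ Finset.univ.erase L, p i / a i := by
    have h1 : ∑ i ∈ Finset.univ.erase L, (p i / b M - p i * (a i - b M) / (b M) ^ 2)
        ≤ ∑ i ∈ Finset.univ.erase L, p i / a i :=
      Finset.sum_le_sum (fun i _ => key i)
    have h2 : ∑ i ∈ Finset.univ.erase L, (p i / b M - p i * (a i - b M) / (b M) ^ 2)
        = (1 - p L) / b M - (∑ i ∈ Finset.univ.erase L, p i * (a i - b M)) / (b M) ^ 2 := by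
      rw [Finset.sum_sub_distrib, ← Finset.sum_div, ← Finset.sum_div, hsp]
    have hB := hbpos M
    have h3 : (∑ i ∈ Finset.univ.erase L, p i * (a i - b M)) / (b M) ^ 2 ≤ 0 :=
      div_nonpos_of_nonpos_of_nonneg hEA (by positivity)
    linarith
  -- T1 ≥ 1 / b M
  have hTerase : ∑ i ∈ Finset.univ.erase L, p i / a i = T - p L / a L := by
    rw [hT, Finset.sum_erase_eq_sub (Finset.mem_univ L)]
  have hT1ge : 1 / b M ≤ T1 := by
    rw [hT1, ← hTerase, le_div_iff₀ h1pL]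
    have : (1 - p L) / b M = 1 / b M * (1 - p L) := by ring
    linarith [hsumge, this.symm.le]
  -- T1 ≤ T
  have hT1leT : T1 ≤ T := by
    rw [hT1, div_le_iff₀ h1pL]
    have h4 : p L * T ≤ p L * (1 / a L) := mul_le_mul_of_nonneg_left hTle (hp L).le
    have h5 : p L * (1 / a L) = p L / a L := by ring
    nlinarith
  -- each term of the sum is nonnegative
  have hterm : ∀ j : Fin (m + 1), 0 ≤ q j * (T1 - 1 / b j) := by
    intro j
    have h1 : 1 / b j ≤ 1 / b M := one_div_le_one_div_of_le (hbpos M) (hbM j)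
    have := hq j
    nlinarith [hT1ge]
  -- partial sum ≤ full sum
  have hsub : ∑ j ∈ Finset.univ.filter (fun j : Fin (m + 1) => (j : ℕ) < k),
      q j * (T1 - 1 / b j) ≤ ∑ j, q j * (T1 - 1 / b j) :=
    Finset.sum_le_sum_of_subset_of_nonneg (Finset.filter_subset _ _)
      (fun j _ _ => hterm j)
  -- full sum = T1 - T / w
  have hfull : ∑ j, q j * (T1 - 1 / b j) = T1 - T / w := by
    have h6 : ∑ j, q j / b j = T / w := by
      field_simp [hbal]
      rw [hbal]; ring
    calc ∑ j, q j * (T1 - 1 / b j)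
        = (∑ j, q j) * T1 - ∑ j, q j / b j := by
          rw [Finset.sum_mul, ← Finset.sum_sub_distrib]
          exact Finset.sum_congr rfl fun j _ => by ring
      _ = T1 - T / w := by rw [hqsum, h6]; ring
  have hT1T : T1 ≤ T := hT1leT
  have hfin : w * ∑ j ∈ Finset.univ.filter (fun j : Fin (m + 1) => (j : ℕ) < k),
      q j * (T1 - 1 / b j) ≤ w * (T1 - T / w) := by
    apply mul_le_mul_of_nonneg_left _ hw0.le
    rw [← hfull]; exact hsub
  have : w * (T1 - T / w) = w * T1 - T := by field_simp
  linarith
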